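/- Let π be a permutation of [n] avoiding both 1342 and 1423, with π_1 = i and π_2 = j where j ≥ i+2 and j ≤ n-1. Then every element of the interval [i+1, j-1] occurs in π before every element of the interval [j+1, n], and the elements of [i+1, j-1] occur in π in decreasing order. -/

import Mathlib

/-- The word `w` contains the pattern `p`: some subsequence of `w` is
order-isomorphic to `p`. -/
def ContainsPat (w p : List ℕ) : Prop :=
  ∃ s : List ℕ, s.Sublist w ∧ s.length = p.length ∧
    ∀ i j : ℕ, i < p.length → j < p.length → (s[i]! < s[j]! ↔ p[i]! < p[j]!)

/-- The word `w` avoids the pattern `p`. -/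
def AvoidsPat (w p : List ℕ) : Prop := ¬ ContainsPat w p

/-- `π` is the one-line notation of a permutation of `{1,…,n}`. -/
def IsPermList (n : ℕ) (π : List ℕ) : Prop :=
  π.Perm ((List.range n).map (· + 1))

/-- The number of descents of a word. -/
def descList (π : List ℕ) : ℕ :=
  ((List.range (π.length - 1)).filter (fun t => decide (π[t + 1]! < π[t]!))).length


lemma pat1342_check (a b c d : ℕ) (hab : a < b) (hbc : b < c) (hcd : c < d) :
    ∀ i' j' : ℕ, i' < 4 → j' < 4 →
      (([a,c,d,b][i']! : ℕ) < [a,c,d,b][j']! ↔ ([1,3,4,2][i']! : ℕ) < [1,3,4,2][j']!) := by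
  intro i' j' hi hj
  interval_cases i' <;> interval_cases j' <;> simp <;> omega

lemma pat1423_check (a b c d : ℕ) (hab : a < b) (hbc : b < c) (hcd : c < d) :
    ∀ i' j' : ℕ, i' < 4 → j' < 4 →
      (([a,d,b,c][i']! : ℕ) < [a,d,b,c][j']! ↔ ([1,4,2,3][i']! : ℕ) < [1,4,2,3][j']!) := by
  intro i' j' hi hj
  interval_cases i' <;> interval_cases j' <;> simp <;> omega

lemma sublist_of_indexOf_lt (l : List ℕ) (a b c d : ℕ)
    (ha : a ∈ l) (hb : b ∈ l) (hc : c ∈ l) (hd : d ∈ l)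
    (h1 : l.idxOf a < l.idxOf b) (h2 : l.idxOf b < l.idxOf c)
    (h3 : l.idxOf c < l.idxOf d) :
    [a, b, c, d].Sublist l := by
  have ha' := List.idxOf_lt_length_iff.2 ha
  have hb' := List.idxOf_lt_length_iff.2 hb
  have hc' := List.idxOf_lt_length_iff.2 hc
  have hd' := List.idxOf_lt_length_iff.2 hd
  have := List.map_getElem_sublist (l := l)
    (is := [⟨l.idxOf a, ha'⟩, ⟨l.idxOf b, hb'⟩, ⟨l.idxOf c, hc'⟩, ⟨l.idxOf d, hd'⟩])
    (by simp; omega)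
  simpa [List.getElem_idxOf, ha', hb', hc', hd'] using this

/-- If a `{1342,1423}`-avoiding permutation of `[n]` starts `i, j` with
`i+2 ≤ j ≤ n-1`, then every element of `[i+1, j-1]` occurs before every element
of `[j+1, n]`, and the elements of `[i+1, j-1]` occur in decreasing order. -/
theorem stmt13 (n i j : ℕ) (π : List ℕ)
    (hπ : IsPermList n π) (h1 : AvoidsPat π [1,3,4,2]) (h2 : AvoidsPat π [1,4,2,3])
    (hfirst : π[0]! = i) (hsecond : π[1]! = j) (hij : i + 2 ≤ j) (hjn : j ≤ n - 1) :
    (∀ x y, i + 1 ≤ x → x ≤ j - 1 → j + 1 ≤ y → y ≤ n →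
      π.idxOf x < π.idxOf y) ∧
    (∀ x y, i + 1 ≤ x → x < y → y ≤ j - 1 → π.idxOf y < π.idxOf x) := by
  have hlen : π.length = n := by
    have := hπ.length_eq; simpa using this
  have hmem : ∀ x, x ∈ π ↔ 1 ≤ x ∧ x ≤ n := by
    intro x
    rw [hπ.mem_iff]
    simp only [List.mem_map, List.mem_range]
    constructor
    · rintro ⟨a, ha, rfl⟩; omega
    · rintro ⟨hx1, hx2⟩; exact ⟨x - 1, by omega, by omega⟩
  have hnd : π.Nodup := hπ.nodup_iff.2 (by
    apply List.Nodup.map (fun a b h => by omega) List.nodup_range)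
  have hn3 : 3 ≤ n := by omega
  have h0 : 0 < π.length := by omega
  have h1' : 1 < π.length := by omega
  have hπ0 : π[0] = i := by rw [← hfirst]; exact (getElem!_pos π 0 h0).symm
  have hπ1 : π[1] = j := by rw [← hsecond]; exact (getElem!_pos π 1 h1').symm
  have hi_mem : i ∈ π := hπ0 ▸ List.getElem_mem h0
  have hj_mem : j ∈ π := hπ1 ▸ List.getElem_mem h1'
  have hi1 : 1 ≤ i := ((hmem i).1 hi_mem).1
  have hidxi : π.idxOf i = 0 := by
    have h : π[π.idxOf i]'(List.idxOf_lt_length_iff.2 hi_mem) = π[0]'h0 :=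
      (List.getElem_idxOf _).trans hπ0.symm
    exact hnd.getElem_inj_iff.1 h
  have hidxj : π.idxOf j = 1 := by
    have h : π[π.idxOf j]'(List.idxOf_lt_length_iff.2 hj_mem) = π[1]'h1' :=
      (List.getElem_idxOf _).trans hπ1.symm
    exact hnd.getElem_inj_iff.1 h
  -- index of any element distinct from i and j is at least 2
  have hidx2 : ∀ x, x ∈ π → x ≠ i → x ≠ j → 2 ≤ π.idxOf x := by
    intro x hx hxi hxj
    have hlt := List.idxOf_lt_length_iff.2 hx
    have hx' : π[π.idxOf x]'hlt = x := List.getElem_idxOf hlt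
    have h0' : π.idxOf x ≠ 0 := fun h =>
      hxi (by rw [← hx', hnd.getElem_inj_iff.2 h, hπ0]; exact h0)
    have h1'' : π.idxOf x ≠ 1 := fun h =>
      hxj (by rw [← hx', hnd.getElem_inj_iff.2 h, hπ1]; exact h1')
    omega
  constructor
  · intro x y hx1 hx2 hy1 hy2
    have hxmem : x ∈ π := (hmem x).2 ⟨by omega, by omega⟩
    have hymem : y ∈ π := (hmem y).2 ⟨by omega, by omega⟩
    have hxi2 : 2 ≤ π.idxOf x := hidx2 x hxmem (by omega) (by omega)
    have hyi2 : 2 ≤ π.idxOf y := hidx2 y hymem (by omega) (by omega)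
    by_contra hcon
    have hne : π.idxOf x ≠ π.idxOf y := by
      intro h
      have := List.idxOf_inj hxmem |>.1 h
      omega
    have hyx : π.idxOf y < π.idxOf x := by omega
    apply h1
    refine ⟨[i, j, y, x], ?_, by simp, ?_⟩
    · exact sublist_of_indexOf_lt π i j y x hi_mem hj_mem hymem hxmem
        (by omega) (by omega) hyx
    · intro a b ha hb
      simp only [List.length_cons, List.length_nil] at ha hb
      exact pat1342_check i x j y (by omega) (by omega) (by omega) a b ha hb
  · intro x y hx1 hxy hy2
    have hxmem : x ∈ π := (hmem x).2 ⟨by omega, by omega⟩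
    have hymem : y ∈ π := (hmem y).2 ⟨by omega, by omega⟩
    have hxi2 : 2 ≤ π.idxOf x := hidx2 x hxmem (by omega) (by omega)
    have hyi2 : 2 ≤ π.idxOf y := hidx2 y hymem (by omega) (by omega)
    by_contra hcon
    have hne : π.idxOf x ≠ π.idxOf y := by
      intro h
      have := List.idxOf_inj hxmem |>.1 h
      omega
    have hxy' : π.idxOf x < π.idxOf y := by omega
    apply h2
    refine ⟨[i, j, x, y], ?_, by simp, ?_⟩
    · exact sublist_of_indexOf_lt π i j x y hi_mem hj_mem hxmem hymem
        (by omega) (by omega) hxy'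
    · intro a b ha hb
      simp only [List.length_cons, List.length_nil] at ha hb
      exact pat1423_check i x y j (by omega) (by omega) (by omega) a b ha hb
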